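/- For X ≥ 1/5, Y ∈ ℝ with sin(2πY) ≠ 0, and any positive integer k, |Σ_{n≥1} n⁵ e^{−π(n²−1)X} sin(2nkπY)| ≤ k · (1 + ω(X))/(1 − μ(X)) · |Σ_{n≥1} n e^{−π(n²−1)X} sin(2nπY)|, where μ(X) = Σ_{n≥2} n² e^{−π(n²−1)X} and ω(X) = Σ_{n≥2} n⁶ e^{−π(n²−1)X}. -/

import Mathlib

open Real

lemma exp16 (x : ℝ) (hx : 0 ≤ x) : (1 + x/16)^16 ≤ Real.exp x := by
  have h : (1 : ℝ) + x/16 ≤ Real.exp (x/16) := by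
    have := Real.add_one_le_exp (x/16); linarith
  calc (1 + x/16)^16 ≤ (Real.exp (x/16))^16 :=
        pow_le_pow_left₀ (by positivity) h 16
    _ = Real.exp x := by rw [← Real.exp_nat_mul]; congr 1; push_cast; ring

lemma sq_le_pow3 (n : ℕ) : ((n:ℝ)+2)^2 ≤ 4 * 3^n := by
  induction n with
  | zero => norm_num
  | succ n ih =>
    push_cast
    have h1 : ((n:ℝ)+1+2)^2 ≤ 3 * ((n:ℝ)+2)^2 := by nlinarith [Nat.cast_nonneg (α := ℝ) n]
    have h2 : (3:ℝ) * ((n:ℝ)+2)^2 ≤ 3 * (4 * 3^n) := by linarith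
    calc ((n:ℝ)+1+2)^2 ≤ 3 * (4 * 3^n) := le_trans h1 h2
      _ = 4 * 3^(n+1) := by ring

lemma exp3_bound : (3:ℝ) * Real.exp (-3) < 1/5 := by
  have h3 : ((19/16:ℝ))^16 ≤ Real.exp 3 := by
    have h := exp16 3 (by norm_num); norm_num at h ⊢; linarith
  have hpos : (0:ℝ) < ((19/16:ℝ))^16 := by positivity
  have : Real.exp (-3) ≤ (((19/16:ℝ))^16)⁻¹ := by
    rw [Real.exp_neg]
    exact inv_anti₀ hpos h3
  have hnum : (3:ℝ) * (((19/16:ℝ))^16)⁻¹ < 1/5 := by norm_num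
  nlinarith

lemma mu_lt_one {X : ℝ} (hX : 1/5 ≤ X)
    (hsum : Summable (fun n : ℕ => ((n:ℝ)+2)^2 * Real.exp (-π * (((n:ℝ)+2)^2 - 1) * X))) :
    ∑' n : ℕ, ((n:ℝ)+2)^2 * Real.exp (-π * (((n:ℝ)+2)^2 - 1) * X) < 1 := by
  have hπ : (3:ℝ) < π := Real.pi_gt_three
  have hq1 : (3:ℝ) * Real.exp (-3) < 1 := lt_trans exp3_bound (by norm_num)
  have hq0 : (0:ℝ) ≤ 3 * Real.exp (-3) := by positivity
  have hterm : ∀ n : ℕ, ((n:ℝ)+2)^2 * Real.exp (-π * (((n:ℝ)+2)^2 - 1) * X)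
      ≤ (4 * Real.exp (-(9/5))) * (3 * Real.exp (-3))^n := by
    intro n
    have hn : (0:ℝ) ≤ (n:ℝ) := Nat.cast_nonneg n
    have harg : -π * (((n:ℝ)+2)^2 - 1) * X ≤ -(3*(n:ℝ) + 9/5) := by
      have hnn : (n:ℝ) ≤ (n:ℝ)^2 := by
        exact_mod_cast Nat.le_self_pow (by norm_num) n
      have h1 : (5*(n:ℝ) + 3) ≤ ((n:ℝ)+2)^2 - 1 := by nlinarith
      have h2 : (3:ℝ) * (5*(n:ℝ)+3) * (1/5) ≤ π * (((n:ℝ)+2)^2 - 1) * X := by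
        have hp1 : (0:ℝ) ≤ 5*(n:ℝ)+3 := by linarith
        have : (3:ℝ) * (5*(n:ℝ)+3) ≤ π * (((n:ℝ)+2)^2 - 1) := by nlinarith
        nlinarith
      nlinarith
    have hexp : Real.exp (-π * (((n:ℝ)+2)^2 - 1) * X) ≤ Real.exp (-(3*(n:ℝ)+9/5)) :=
      Real.exp_le_exp.mpr harg
    have hsplit : Real.exp (-(3*(n:ℝ)+9/5)) = Real.exp (-(9/5)) * (Real.exp (-3))^n := by
      rw [← Real.exp_nat_mul, ← Real.exp_add]; ring_nf
    have h3n := sq_le_pow3 n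
    have hE : (0:ℝ) ≤ Real.exp (-π * (((n:ℝ)+2)^2 - 1) * X) := (Real.exp_pos _).le
    calc ((n:ℝ)+2)^2 * Real.exp (-π * (((n:ℝ)+2)^2 - 1) * X)
        ≤ (4 * 3^n) * (Real.exp (-(9/5)) * (Real.exp (-3))^n) := by
          rw [← hsplit]
          have := Real.exp_le_exp.mpr harg
          have h4 : (0:ℝ) ≤ 4 * 3^n := by positivity
          have hsq : (0:ℝ) ≤ ((n:ℝ)+2)^2 := by positivity
          nlinarith [Real.exp_pos (-(3*(n:ℝ)+9/5))]
      _ = (4 * Real.exp (-(9/5))) * (3 * Real.exp (-3))^n := by rw [mul_pow]; ring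
  have hgeo : Summable (fun n : ℕ => (4 * Real.exp (-(9/5))) * (3 * Real.exp (-3))^n) :=
    (summable_geometric_of_lt_one hq0 hq1).mul_left _
  have hle := Summable.tsum_le_tsum hterm hsum hgeo
  have htsum : ∑' n : ℕ, (4 * Real.exp (-(9/5))) * (3 * Real.exp (-3))^n
      = (4 * Real.exp (-(9/5))) * (1 - 3 * Real.exp (-3))⁻¹ := by
    rw [tsum_mul_left, tsum_geometric_of_lt_one hq0 hq1]
  rw [htsum] at hle
  refine lt_of_le_of_lt hle ?_
  have h95 : ((89/80:ℝ))^16 ≤ Real.exp (9/5) := by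
    have h := exp16 (9/5) (by norm_num); norm_num at h ⊢; linarith
  have hpos : (0:ℝ) < ((89/80:ℝ))^16 := by positivity
  have he95 : Real.exp (-(9/5)) ≤ (((89/80:ℝ))^16)⁻¹ := by
    rw [Real.exp_neg]; exact inv_anti₀ hpos h95
  have hq : (0:ℝ) < 1 - 3 * Real.exp (-3) := by linarith [exp3_bound]
  rw [mul_inv_lt_iff₀ hq]  -- maybe wrong name; goal (4e)·(1-q)⁻¹ < 1
  have : (4:ℝ) * (((89/80:ℝ))^16)⁻¹ < 4/5 := by norm_num
  nlinarith [exp3_bound, Real.exp_pos (-(9/5:ℝ))]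

lemma sin_nat_bound (m : ℕ) (x : ℝ) : |Real.sin (m * x)| ≤ m * |Real.sin x| := by
  induction m with
  | zero => simp
  | succ m ih =>
    have harg : ((m : ℝ) + 1) * x = m * x + x := by ring
    push_cast
    rw [harg, Real.sin_add]
    calc |Real.sin (m*x) * Real.cos x + Real.cos (m*x) * Real.sin x|
        ≤ |Real.sin (m*x) * Real.cos x| + |Real.cos (m*x) * Real.sin x| := abs_add_le _ _
      _ ≤ |Real.sin (m*x)| + |Real.sin x| := by
          rw [abs_mul, abs_mul]
          have h1 := Real.abs_cos_le_one x
          have h2 := Real.abs_cos_le_one (m*x)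
          have := abs_nonneg (Real.sin (m*x))
          have := abs_nonneg (Real.sin x)
          nlinarith
      _ ≤ ((m:ℝ) + 1) * |Real.sin x| := by nlinarith [abs_nonneg (Real.sin x)]

lemma summ (p : ℕ) {X : ℝ} (hX : 0 < X) :
    Summable (fun n : ℕ => ((n:ℝ)+1)^p * Real.exp (-π * (((n:ℝ)+1)^2 - 1) * X)) := by
  have hπX : 0 < π * X := by positivity
  have hr : Real.exp (-(π * X)) < 1 := Real.exp_lt_one_iff.mpr (by linarith)
  have hr0 : 0 < Real.exp (-(π * X)) := Real.exp_pos _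
  set r := Real.exp (-(π * X)) with hrdef
  have hsum0 : Summable (fun n : ℕ => (n:ℝ)^p * r^n) :=
    summable_pow_mul_geometric_of_norm_lt_one p (by rwa [Real.norm_eq_abs, abs_of_pos hr0])
  have hsum1 : Summable (fun n : ℕ => ((n:ℝ)+1)^p * r^(n+1)) := by
    have h := hsum0.comp_injective (Nat.succ_injective)
    refine h.congr fun n => ?_
    simp only [Function.comp, Nat.succ_eq_add_one]
    push_cast
    ring_nf
  have hsum2 : Summable (fun n : ℕ => ((n:ℝ)+1)^p * r^n) := by
    have h := hsum1.mul_left r⁻¹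
    refine h.congr fun n => ?_
    rw [pow_succ]
    field_simp
  refine hsum2.of_nonneg_of_le (fun n => by positivity) fun n => ?_
  have h1 : -π * (((n:ℝ)+1)^2 - 1) * X ≤ -(π*X) * n := by nlinarith [sq_nonneg ((n:ℝ))]
  have h := Real.exp_le_exp.mpr h1
  have h2 : Real.exp (-(π*X) * n) = r ^ n := by
    rw [hrdef, ← Real.exp_nat_mul]; ring_nf
  rw [h2] at h
  have hp : (0:ℝ) ≤ ((n:ℝ)+1)^p := by positivity
  exact mul_le_mul_of_nonneg_left h hp

lemma summ_shift (p : ℕ) {X : ℝ} (hX : 0 < X) :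
    Summable (fun n : ℕ => ((n:ℝ)+2)^p * Real.exp (-π * (((n:ℝ)+2)^2 - 1) * X)) := by
  have h := (summ p hX).comp_injective (Nat.succ_injective)
  refine h.congr fun n => ?_
  simp only [Function.comp, Nat.succ_eq_add_one]
  push_cast
  ring_nf

theorem thetaXXY_quotient_bound (X Y : ℝ) (hX : 1/5 ≤ X) (hY : Real.sin (2 * π * Y) ≠ 0)
    (k : ℕ) (hk : 1 ≤ k) :
    |∑' n : ℕ, ((n : ℝ) + 1)^5 * Real.exp (-π * (((n : ℝ) + 1)^2 - 1) * X) *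
        Real.sin (2 * ((n : ℝ) + 1) * (k : ℝ) * π * Y)|
      ≤ (k : ℝ) *
        ((1 + ∑' n : ℕ, ((n : ℝ) + 2)^6 * Real.exp (-π * (((n : ℝ) + 2)^2 - 1) * X)) /
         (1 - ∑' n : ℕ, ((n : ℝ) + 2)^2 * Real.exp (-π * (((n : ℝ) + 2)^2 - 1) * X))) *
        |∑' n : ℕ, ((n : ℝ) + 1) * Real.exp (-π * (((n : ℝ) + 1)^2 - 1) * X) *
            Real.sin (2 * ((n : ℝ) + 1) * π * Y)| := by
  have hX0 : (0:ℝ) < X := lt_of_lt_of_le (by norm_num) hX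
  set s := |Real.sin (2*π*Y)| with hsdef
  have hs : 0 < s := abs_pos.mpr hY
  set μ := ∑' n : ℕ, ((n:ℝ)+2)^2 * Real.exp (-π * (((n:ℝ)+2)^2 - 1) * X) with hμdef
  set ω := ∑' n : ℕ, ((n:ℝ)+2)^6 * Real.exp (-π * (((n:ℝ)+2)^2 - 1) * X) with hωdef
  have hSμ := summ_shift 2 hX0
  have hSω := summ_shift 6 hX0
  have hμ1 : μ < 1 := mu_lt_one hX hSμ
  have hμ0 : 0 ≤ μ := tsum_nonneg fun n => by positivity
  have hω0 : 0 ≤ ω := tsum_nonneg fun n => by positivity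
  have h1μ : 0 < 1 - μ := by linarith
  -- sin bound for the numerator terms
  have hsin5 : ∀ n : ℕ, |Real.sin (2*((n:ℝ)+1)*(k:ℝ)*π*Y)| ≤ ((n:ℝ)+1) * k * s := by
    intro n
    have h := sin_nat_bound ((n+1)*k) (2*π*Y)
    have harg : ((((n+1)*k : ℕ)):ℝ) * (2*π*Y) = 2*((n:ℝ)+1)*(k:ℝ)*π*Y := by push_cast; ring
    rw [harg] at h
    calc |Real.sin (2*((n:ℝ)+1)*(k:ℝ)*π*Y)| ≤ (((n+1)*k : ℕ):ℝ) * s := h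
      _ = ((n:ℝ)+1) * k * s := by push_cast; ring
  have hsin1 : ∀ n : ℕ, |Real.sin (2*((n:ℝ)+1)*π*Y)| ≤ ((n:ℝ)+1) * s := by
    intro n
    have h := sin_nat_bound (n+1) (2*π*Y)
    have harg : (((n+1 : ℕ)):ℝ) * (2*π*Y) = 2*((n:ℝ)+1)*π*Y := by push_cast; ring
    rw [harg] at h
    calc |Real.sin (2*((n:ℝ)+1)*π*Y)| ≤ (((n+1 : ℕ)):ℝ) * s := h
      _ = ((n:ℝ)+1) * s := by push_cast; ring
  -- numerator bound: |num| ≤ k * s * (1 + ω)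
  have hnum : |∑' n : ℕ, ((n : ℝ) + 1)^5 * Real.exp (-π * (((n : ℝ) + 1)^2 - 1) * X) *
      Real.sin (2 * ((n : ℝ) + 1) * (k : ℝ) * π * Y)| ≤ (k:ℝ) * s * (1 + ω) := by
    have hHS : HasSum (fun n : ℕ => ((k:ℝ)*s) * (((n:ℝ)+1)^6 * Real.exp (-π * (((n:ℝ)+1)^2-1)*X)))
        (((k:ℝ)*s) * ∑' n : ℕ, ((n:ℝ)+1)^6 * Real.exp (-π * (((n:ℝ)+1)^2-1)*X)) :=
      (summ 6 hX0).hasSum.mul_left _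
    have hb : ∀ n : ℕ, ‖((n : ℝ) + 1)^5 * Real.exp (-π * (((n : ℝ) + 1)^2 - 1) * X) *
        Real.sin (2 * ((n : ℝ) + 1) * (k : ℝ) * π * Y)‖
        ≤ ((k:ℝ)*s) * (((n:ℝ)+1)^6 * Real.exp (-π * (((n:ℝ)+1)^2-1)*X)) := by
      intro n
      rw [Real.norm_eq_abs, abs_mul, abs_mul]
      have hE : (0:ℝ) < Real.exp (-π * (((n:ℝ)+1)^2-1)*X) := Real.exp_pos _
      have h5 : (0:ℝ) ≤ ((n:ℝ)+1)^5 := by positivity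
      rw [abs_of_nonneg h5, abs_of_pos hE]
      have := hsin5 n
      have h6 : ((n:ℝ)+1)^5 * (((n:ℝ)+1) * k * s) = (k*s) * ((n:ℝ)+1)^6 := by ring
      nlinarith [mul_pos (mul_pos (by positivity : (0:ℝ) < ((n:ℝ)+1)^5) hE) hs,
        abs_nonneg (Real.sin (2*((n:ℝ)+1)*(k:ℝ)*π*Y)), hE.le, h5]
    have h := tsum_of_norm_bounded hHS hb
    rw [Real.norm_eq_abs] at h
    refine le_trans h ?_
    -- ∑' (n+1)^6 E n = 1 + ω
    have hshift : ∑' n : ℕ, ((n:ℝ)+1)^6 * Real.exp (-π * (((n:ℝ)+1)^2-1)*X) = 1 + ω := by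
      rw [Summable.tsum_eq_zero_add (summ 6 hX0)]
      congr 1
      · norm_num
      · rw [hωdef]
        refine tsum_congr fun n => ?_
        push_cast
        ring_nf
    rw [hshift]
  -- denominator lower bound : s * (1 - μ) ≤ |den|
  have hSden : Summable (fun n : ℕ => ((n:ℝ)+1) * Real.exp (-π * (((n:ℝ)+1)^2-1)*X) *
      Real.sin (2*((n:ℝ)+1)*π*Y)) := by
    refine Summable.of_norm_bounded (summ 1 hX0) fun n => ?_
    rw [Real.norm_eq_abs, abs_mul, abs_mul]
    have hE : (0:ℝ) < Real.exp (-π * (((n:ℝ)+1)^2-1)*X) := Real.exp_pos _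
    have h1 : (0:ℝ) ≤ (n:ℝ)+1 := by positivity
    rw [abs_of_nonneg h1, abs_of_pos hE]
    rw [pow_one]
    have hs1 := Real.abs_sin_le_one (2*((n:ℝ)+1)*π*Y)
    nlinarith [mul_nonneg (mul_nonneg h1 hE.le)
      (sub_nonneg.mpr hs1), abs_nonneg (Real.sin (2*((n:ℝ)+1)*π*Y))]
  have hden : s * (1 - μ) ≤ |∑' n : ℕ, ((n : ℝ) + 1) * Real.exp (-π * (((n : ℝ) + 1)^2 - 1) * X) *
      Real.sin (2 * ((n : ℝ) + 1) * π * Y)| := by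
    rw [Summable.tsum_eq_zero_add hSden]
    have h0 : ((0:ℕ):ℝ) + 1 = 1 := by norm_num
    have hfirst : (((0:ℕ):ℝ) + 1) * Real.exp (-π * ((((0:ℕ):ℝ)+1)^2-1)*X) *
        Real.sin (2*(((0:ℕ):ℝ)+1)*π*Y) = Real.sin (2*π*Y) := by
      norm_num
    rw [hfirst]
    -- tail bound
    have hHS : HasSum (fun n : ℕ => s * (((n:ℝ)+2)^2 * Real.exp (-π * (((n:ℝ)+2)^2-1)*X))) (s * μ) :=
      hSμ.hasSum.mul_left _
    have hb : ∀ n : ℕ, ‖(((n+1:ℕ):ℝ)+1) * Real.exp (-π * ((((n+1:ℕ):ℝ)+1)^2-1)*X) *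
        Real.sin (2*(((n+1:ℕ):ℝ)+1)*π*Y)‖
        ≤ s * (((n:ℝ)+2)^2 * Real.exp (-π * (((n:ℝ)+2)^2-1)*X)) := by
      intro n
      have hc : ((n+1:ℕ):ℝ) + 1 = (n:ℝ) + 2 := by push_cast; ring
      rw [hc, Real.norm_eq_abs, abs_mul, abs_mul]
      have hE : (0:ℝ) < Real.exp (-π * (((n:ℝ)+2)^2-1)*X) := Real.exp_pos _
      have h1 : (0:ℝ) ≤ (n:ℝ)+2 := by positivity
      rw [abs_of_nonneg h1, abs_of_pos hE]
      have hsin := sin_nat_bound (n+2) (2*π*Y)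
      have harg : (((n+2 : ℕ)):ℝ) * (2*π*Y) = 2*((n:ℝ)+2)*π*Y := by push_cast; ring
      rw [harg] at hsin
      have hsin' : |Real.sin (2*((n:ℝ)+2)*π*Y)| ≤ ((n:ℝ)+2) * s := by
        refine le_trans hsin ?_
        push_cast
        linarith
      have hmul := mul_le_mul_of_nonneg_left hsin' (mul_nonneg h1 hE.le)
      nlinarith [hmul]
    have hT := tsum_of_norm_bounded hHS hb
    rw [Real.norm_eq_abs] at hT
    have habs := abs_add_le (Real.sin (2*π*Y)) (∑' n : ℕ, (((n+1:ℕ):ℝ)+1) *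
      Real.exp (-π * ((((n+1:ℕ):ℝ)+1)^2-1)*X) * Real.sin (2*(((n+1:ℕ):ℝ)+1)*π*Y))
    have htri : s - |∑' n : ℕ, (((n+1:ℕ):ℝ)+1) * Real.exp (-π * ((((n+1:ℕ):ℝ)+1)^2-1)*X) *
        Real.sin (2*(((n+1:ℕ):ℝ)+1)*π*Y)|
        ≤ |Real.sin (2*π*Y) + ∑' n : ℕ, (((n+1:ℕ):ℝ)+1) * Real.exp (-π * ((((n+1:ℕ):ℝ)+1)^2-1)*X) *
        Real.sin (2*(((n+1:ℕ):ℝ)+1)*π*Y)| := by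
      set T := ∑' n : ℕ, (((n+1:ℕ):ℝ)+1) * Real.exp (-π * ((((n+1:ℕ):ℝ)+1)^2-1)*X) *
        Real.sin (2*(((n+1:ℕ):ℝ)+1)*π*Y) with hTdef
      have h2 := abs_add_le (Real.sin (2*π*Y) + T) (-T)
      rw [abs_neg] at h2
      have h3 : Real.sin (2*π*Y) + T + (-T) = Real.sin (2*π*Y) := by ring
      rw [h3] at h2
      rw [hsdef]
      linarith
    have : s * (1 - μ) ≤ s - |∑' n : ℕ, (((n+1:ℕ):ℝ)+1) * Real.exp (-π * ((((n+1:ℕ):ℝ)+1)^2-1)*X) *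
        Real.sin (2*(((n+1:ℕ):ℝ)+1)*π*Y)| := by nlinarith
    linarith
  -- combine
  have hfrac0 : (0:ℝ) ≤ (1 + ω) / (1 - μ) := by positivity
  calc |∑' n : ℕ, ((n : ℝ) + 1)^5 * Real.exp (-π * (((n : ℝ) + 1)^2 - 1) * X) *
        Real.sin (2 * ((n : ℝ) + 1) * (k : ℝ) * π * Y)|
      ≤ (k:ℝ) * s * (1 + ω) := hnum
    _ = (k:ℝ) * ((1 + ω) / (1 - μ)) * (s * (1 - μ)) := by field_simp
    _ ≤ (k:ℝ) * ((1 + ω) / (1 - μ)) * |∑' n : ℕ, ((n : ℝ) + 1) *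
        Real.exp (-π * (((n : ℝ) + 1)^2 - 1) * X) * Real.sin (2 * ((n : ℝ) + 1) * π * Y)| := by
      refine mul_le_mul_of_nonneg_left hden ?_
      positivity
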